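/- Let γ : ℝ → ℝ^d be twice continuously differentiable, let t : ℝ → ℝ be continuous, and let σ > 0. Then lim_{N → ∞} N³ · Σ_{i=1}^{N−1} exp(−(t(i/N) − t((i+1)/N))²/(2σ²)) · ‖γ((i+1)/N) − 2·γ(i/N) + γ((i−1)/N)‖² = ∫₀¹ ‖γ''(s)‖² ds. -/

import Mathlib

open Filter

open intervalIntegral


section Aux

variable {E : Type*} [NormedAddCommGroup E] [NormedSpace ℝ E] [CompleteSpace E]

lemma riemann_sum_tendsto' (f : ℝ → ℝ) (hf : Continuous f) :
    Tendsto (fun N : ℕ => (1/(N:ℝ)) * ∑ i ∈ Finset.range N, f ((i:ℝ)/N))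
      atTop (nhds (∫ s in (0:ℝ)..1, f s)) := by
  rw [Metric.tendsto_atTop]
  intro ε hε
  have huc : UniformContinuousOn f (Set.Icc 0 1) :=
    isCompact_Icc.uniformContinuousOn_of_continuous hf.continuousOn
  obtain ⟨δ, hδ, hδ'⟩ := Metric.uniformContinuousOn_iff_le.mp huc (ε/2) (by linarith)
  obtain ⟨N₀, hN₀⟩ := exists_nat_gt (1/δ)
  refine ⟨max N₀ 1, fun N hN => ?_⟩
  have hN1 : 1 ≤ N := le_trans (le_max_right _ _) hN
  have hNR : (1:ℝ) ≤ N := by exact_mod_cast hN1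
  have hNpos : (0:ℝ) < N := by linarith
  have hinv : 1/(N:ℝ) ≤ δ := by
    rw [div_le_iff₀ hNpos]
    have : (N₀:ℝ) ≤ N := by exact_mod_cast le_trans (le_max_left _ _) hN
    rw [div_lt_iff₀ hδ] at hN₀
    nlinarith
  -- split the integral
  have hsplit : (∫ s in (0:ℝ)..1, f s)
      = ∑ i ∈ Finset.range N, ∫ s in ((i:ℝ)/N)..(((i:ℝ)+1)/N), f s := by
    have := intervalIntegral.sum_integral_adjacent_intervals
      (a := fun k : ℕ => (k:ℝ)/N) (n := N) (f := f) (μ := MeasureTheory.volume)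
      (fun k _ => hf.intervalIntegrable _ _)
    simp only [Nat.cast_zero, zero_div, div_self (ne_of_gt hNpos)] at this
    rw [← this]
    apply Finset.sum_congr rfl
    intro i _
    push_cast
    ring_nf
  rw [Real.dist_eq, hsplit, Finset.mul_sum, ← Finset.sum_sub_distrib]
  have hterm : ∀ i ∈ Finset.range N,
      |(1/(N:ℝ)) * f ((i:ℝ)/N) - ∫ s in ((i:ℝ)/N)..(((i:ℝ)+1)/N), f s| ≤ (ε/2) * (1/N) := by
    intro i hi
    have hiN : (i:ℝ) < N := by exact_mod_cast Finset.mem_range.mp hi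
    have hx0 : (0:ℝ) ≤ (i:ℝ)/N := by positivity
    have hx1 : ((i:ℝ)+1)/N ≤ 1 := by
      rw [div_le_one hNpos]
      have : (i:ℝ) + 1 ≤ N := by exact_mod_cast Nat.succ_le_of_lt (Finset.mem_range.mp hi)
      linarith
    have hconst : (1/(N:ℝ)) * f ((i:ℝ)/N)
        = ∫ s in ((i:ℝ)/N)..(((i:ℝ)+1)/N), f ((i:ℝ)/N) := by
      rw [intervalIntegral.integral_const]
      have : ((i:ℝ)+1)/N - (i:ℝ)/N = 1/N := by field_simp; ring
      rw [this, smul_eq_mul]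
    rw [hconst, ← intervalIntegral.integral_sub (intervalIntegrable_const)
      (hf.intervalIntegrable _ _)]
    have hb : ∀ s ∈ Set.uIoc ((i:ℝ)/N) (((i:ℝ)+1)/N), ‖f ((i:ℝ)/N) - f s‖ ≤ ε/2 := by
      intro s hs
      have hle : (i:ℝ)/N ≤ ((i:ℝ)+1)/N := by gcongr; linarith
      rw [Set.uIoc_of_le hle] at hs
      have hs1 : (i:ℝ)/N < s := hs.1
      have hs2 : s ≤ ((i:ℝ)+1)/N := hs.2
      have hmem : s ∈ Set.Icc (0:ℝ) 1 := ⟨by linarith, by linarith⟩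
      have hmem' : (i:ℝ)/N ∈ Set.Icc (0:ℝ) 1 :=
        ⟨hx0, by rw [div_le_one hNpos]; linarith⟩
      have hd : dist ((i:ℝ)/N) s ≤ δ := by
        rw [Real.dist_eq, abs_le]
        constructor
        · have : ((i:ℝ)+1)/N - (i:ℝ)/N = 1/N := by field_simp; ring
          nlinarith [hinv]
        · linarith [hδ.le, hinv, hs1]
      simpa [Real.norm_eq_abs, Real.dist_eq] using hδ' _ hmem' _ hmem hd
    have := intervalIntegral.norm_integral_le_of_norm_le_const hb
    have habs : |((i:ℝ)+1)/N - (i:ℝ)/N| = 1/N := by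
      rw [show ((i:ℝ)+1)/N - (i:ℝ)/N = 1/N by field_simp; ring]
      exact abs_of_pos (by positivity)
    rw [habs] at this
    simpa [Real.norm_eq_abs] using this
  calc |∑ i ∈ Finset.range N, ((1/(N:ℝ)) * f ((i:ℝ)/N) - ∫ s in ((i:ℝ)/N)..(((i:ℝ)+1)/N), f s)|
      ≤ ∑ i ∈ Finset.range N, |(1/(N:ℝ)) * f ((i:ℝ)/N) - ∫ s in ((i:ℝ)/N)..(((i:ℝ)+1)/N), f s| :=
        Finset.abs_sum_le_sum_abs _ _
    _ ≤ ∑ _i ∈ Finset.range N, (ε/2) * (1/N) := Finset.sum_le_sum hterm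
    _ = N * ((ε/2) * (1/N)) := by rw [Finset.sum_const, Finset.card_range]; ring
    _ = ε/2 := by field_simp
    _ < ε := by linarith

lemma second_diff_est' (γ : ℝ → E) (hd1 : Differentiable ℝ γ)
    (hd2 : Differentiable ℝ (deriv γ)) (hc2 : Continuous (deriv (deriv γ)))
    (x h ε : ℝ) (hh : 0 < h)
    (hb : ∀ v ∈ Set.Icc (x-h) (x+h), ‖deriv (deriv γ) v - deriv (deriv γ) x‖ ≤ ε) :
    ‖γ (x+h) - (2:ℝ) • γ x + γ (x-h) - (h^2) • deriv (deriv γ) x‖ ≤ h^2 * ε := by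
  set G := deriv (deriv γ) with hG
  have hc1 : Continuous (deriv γ) := hd2.continuous
  have key : ∀ a b : ℝ, (∫ u in a..b, deriv γ u) = γ b - γ a := fun a b =>
    intervalIntegral.integral_deriv_eq_sub (fun u _ => hd1 u) (hc1.intervalIntegrable _ _)
  have key2 : ∀ a b : ℝ, (∫ u in a..b, G u) = deriv γ b - deriv γ a := fun a b =>
    intervalIntegral.integral_deriv_eq_sub (fun u _ => hd2 u) (hc2.intervalIntegrable _ _)
  have hcsub : Continuous (fun u : ℝ => deriv γ (u - h)) :=
    hc1.comp (continuous_id.sub continuous_const)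
  have eq1 : γ (x+h) - (2:ℝ) • γ x + γ (x-h)
      = ∫ u in x..(x+h), (deriv γ u - deriv γ (u - h)) := by
    rw [intervalIntegral.integral_sub (hc1.intervalIntegrable _ _)
      (hcsub.intervalIntegrable _ _), intervalIntegral.integral_comp_sub_right (deriv γ) h,
      key, key, show x + h - h = x by ring]
    rw [two_smul]
    abel
  have eq2 : (h^2) • G x = ∫ u in x..(x+h), h • G x := by
    rw [intervalIntegral.integral_const]
    rw [show x + h - x = h by ring, smul_smul, ← sq]
  rw [eq1, eq2, ← intervalIntegral.integral_sub (f := fun u => deriv γ u - deriv γ (u - h))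
    ((hc1.sub hcsub).intervalIntegrable _ _) intervalIntegrable_const]
  have inner : ∀ u ∈ Set.uIoc x (x+h),
      ‖deriv γ u - deriv γ (u - h) - h • G x‖ ≤ ε * h := by
    intro u hu
    rw [Set.uIoc_of_le (by linarith)] at hu
    have e3 : deriv γ u - deriv γ (u - h) = ∫ v in (u-h)..u, G v := (key2 _ _).symm
    have e4 : h • G x = ∫ v in (u-h)..u, G x := by
      rw [intervalIntegral.integral_const, show u - (u - h) = h by ring]
    rw [e3, e4, ← intervalIntegral.integral_sub (hc2.intervalIntegrable _ _)
      intervalIntegrable_const]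
    have hbnd : ∀ v ∈ Set.uIoc (u-h) u, ‖G v - G x‖ ≤ ε := by
      intro v hv
      rw [Set.uIoc_of_le (by linarith)] at hv
      exact hb v ⟨by linarith [hu.1, hv.1], by linarith [hu.2, hv.2]⟩
    have := intervalIntegral.norm_integral_le_of_norm_le_const hbnd
    rwa [show |u - (u - h)| = h by rw [show u - (u-h) = h by ring]; exact abs_of_pos hh] at this
  have := intervalIntegral.norm_integral_le_of_norm_le_const inner
  rw [show |x + h - x| = h by rw [show x + h - x = h by ring]; exact abs_of_pos hh] at this
  calc _ ≤ ε * h * h := this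
    _ = h^2 * ε := by ring


lemma term_est (γ : ℝ → E) (hd1 : Differentiable ℝ γ) (hd2 : Differentiable ℝ (deriv γ))
    (hc2 : Continuous (deriv (deriv γ))) (t : ℝ → ℝ) (σ : ℝ) (hσ : 0 < σ)
    (M0 ε δG δt : ℝ) (hM0 : ∀ s ∈ Set.Icc (0:ℝ) 1, ‖deriv (deriv γ) s‖ ≤ M0)
    (hM0nn : 0 ≤ M0) (hεpos : 0 < ε) (hε1 : ε ≤ 1)
    (hδG' : ∀ a ∈ Set.Icc (0:ℝ) 1, ∀ b ∈ Set.Icc (0:ℝ) 1, dist a b ≤ δG →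
      dist (deriv (deriv γ) a) (deriv (deriv γ) b) ≤ ε)
    (hδt' : ∀ a ∈ Set.Icc (0:ℝ) 1, ∀ b ∈ Set.Icc (0:ℝ) 1, dist a b ≤ δt →
      dist (t a) (t b) ≤ Real.sqrt (ε * (2*σ^2)))
    (N : ℕ) (hN : 1 ≤ N) (hG : 1/(N:ℝ) ≤ δG) (hT : 1/(N:ℝ) ≤ δt)
    (i : ℕ) (hi1 : 1 ≤ i) (hi2 : i < N) :
    |(N:ℝ)^3 * (Real.exp (-(t ((i:ℝ)/N) - t (((i:ℝ)+1)/N))^2/(2*σ^2))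
        * ‖γ (((i:ℝ)+1)/N) - (2:ℝ) • γ ((i:ℝ)/N) + γ (((i:ℝ)-1)/N)‖^2)
      - (1/(N:ℝ)) * ‖deriv (deriv γ) ((i:ℝ)/N)‖^2|
      ≤ (1/(N:ℝ)) * (((M0+1)^2 + (2*M0+1)) * ε) := by
  have hNR : (1:ℝ) ≤ N := by exact_mod_cast hN
  have hNpos : (0:ℝ) < N := by linarith
  have hNne : (N:ℝ) ≠ 0 := ne_of_gt hNpos
  set h := 1/(N:ℝ) with hhdef
  have hhpos : 0 < h := by rw [hhdef]; positivity
  have hiR1 : (1:ℝ) ≤ (i:ℝ) := by exact_mod_cast hi1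
  have hiRN : (i:ℝ) + 1 ≤ N := by exact_mod_cast Nat.succ_le_of_lt hi2
  set x := (i:ℝ)/N with hxdef
  have hxp : ((i:ℝ)+1)/N = x + h := by rw [add_div, ← hxdef, ← hhdef]
  have hxm : ((i:ℝ)-1)/N = x - h := by rw [sub_div, ← hxdef, ← hhdef]
  have hx0 : 0 ≤ x - h := by
    rw [← hxm]; apply div_nonneg (by linarith) hNpos.le
  have hx1 : x + h ≤ 1 := by
    rw [← hxp, div_le_one hNpos]; exact hiRN
  have hxmem : x ∈ Set.Icc (0:ℝ) 1 := ⟨by rw [hxdef]; positivity, by linarith⟩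
  have hxpmem : x + h ∈ Set.Icc (0:ℝ) 1 := ⟨by linarith, hx1⟩
  have hxmmem : x - h ∈ Set.Icc (0:ℝ) 1 := ⟨hx0, by linarith⟩
  rw [hxp, hxm]
  set q := (t x - t (x+h))^2 with hqdef
  have hq0 : 0 ≤ q := sq_nonneg _
  have hσ2 : (0:ℝ) < 2*σ^2 := by positivity
  -- weight bounds
  have hdistt : dist x (x+h) ≤ δt := by
    rw [Real.dist_eq, show x - (x+h) = -h by ring, abs_neg, abs_of_pos hhpos]
    exact hT
  have hqb : q ≤ ε * (2*σ^2) := by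
    have h1 := hδt' x hxmem (x+h) hxpmem hdistt
    rw [Real.dist_eq] at h1
    have h2 : q ≤ (Real.sqrt (ε * (2*σ^2)))^2 := by
      rw [hqdef, ← sq_abs]
      exact pow_le_pow_left₀ (abs_nonneg _) h1 2
    rwa [Real.sq_sqrt (by positivity)] at h2
  have hw1 : Real.exp (-q/(2*σ^2)) ≤ 1 := by
    apply Real.exp_le_one_iff.mpr
    rw [neg_div]
    have : (0:ℝ) ≤ q/(2*σ^2) := by positivity
    linarith
  have hw2 : 1 - ε ≤ Real.exp (-q/(2*σ^2)) := by
    have h1 := Real.add_one_le_exp (-q/(2*σ^2))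
    have h2 : q/(2*σ^2) ≤ ε := by
      rw [div_le_iff₀ hσ2]; linarith [hqb]
    have h3 : -q/(2*σ^2) = -(q/(2*σ^2)) := neg_div _ _
    linarith
  -- second difference
  have hbG : ∀ v ∈ Set.Icc (x-h) (x+h), ‖deriv (deriv γ) v - deriv (deriv γ) x‖ ≤ ε := by
    intro v hv
    have hvmem : v ∈ Set.Icc (0:ℝ) 1 := ⟨by linarith [hv.1], by linarith [hv.2]⟩
    have hd : dist v x ≤ δG := by
      rw [Real.dist_eq, abs_le]
      exact ⟨by linarith [hv.1], by linarith [hv.2]⟩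
    simpa [dist_eq_norm] using hδG' v hvmem x hxmem hd
  have hsd := second_diff_est' γ hd1 hd2 hc2 x h ε hhpos hbG
  set u := γ (x+h) - (2:ℝ) • γ x + γ (x-h) with hudef
  set b := ‖deriv (deriv γ) x‖ with hbdef
  have hbM : b ≤ M0 := hM0 x hxmem
  have hb0 : 0 ≤ b := norm_nonneg _
  have hnorm : |‖u‖ - h^2 * b| ≤ h^2 * ε := by
    have h1 : ‖(h^2) • deriv (deriv γ) x‖ = h^2 * b := by
      rw [norm_smul, Real.norm_eq_abs, abs_of_nonneg (sq_nonneg h)]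
    have h2 := abs_norm_sub_norm_le u ((h^2) • deriv (deriv γ) x)
    rw [h1] at h2
    exact h2.trans hsd
  set A := (N:ℝ)^2 * ‖u‖ with hAdef
  have hA0 : 0 ≤ A := by rw [hAdef]; positivity
  have hNh2 : (N:ℝ)^2 * h^2 = 1 := by rw [hhdef]; field_simp
  have hAb : |A - b| ≤ ε := by
    have e1 : (N:ℝ)^2 * (h^2*b) = b := by rw [← mul_assoc, hNh2, one_mul]
    have e2 : A - b = (N:ℝ)^2 * (‖u‖ - h^2*b) := by rw [hAdef, mul_sub, e1]
    rw [e2, abs_mul, abs_of_nonneg (by positivity : (0:ℝ) ≤ (N:ℝ)^2)]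
    calc (N:ℝ)^2 * |‖u‖ - h^2*b| ≤ (N:ℝ)^2 * (h^2*ε) := by
          exact mul_le_mul_of_nonneg_left hnorm (by positivity)
      _ = ε := by rw [← mul_assoc, hNh2, one_mul]
  have hAle : A ≤ M0 + 1 := by
    have := abs_le.mp hAb
    linarith [this.2]
  have heq : ∀ w : ℝ, (N:ℝ)^3 * (w * ‖u‖^2) - h * b^2
      = h * (w * A^2 - b^2) := by
    intro w
    rw [hAdef, hhdef]
    field_simp
  rw [heq _, abs_mul, abs_of_pos hhpos]
  apply mul_le_mul_of_nonneg_left ?_ hhpos.le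
  have e1 : Real.exp (-q/(2*σ^2)) * A^2 - b^2
      = (Real.exp (-q/(2*σ^2)) - 1)*A^2 + (A - b)*(A + b) := by ring
  rw [e1]
  have b1 : |(Real.exp (-q/(2*σ^2)) - 1)*A^2| ≤ ε * (M0+1)^2 := by
    rw [abs_mul]
    apply mul_le_mul ?_ ?_ (abs_nonneg _) hεpos.le
    · rw [abs_le]
      constructor
      · linarith
      · have h3 : 0 < ε := hεpos
        linarith
    · rw [abs_of_nonneg (by positivity)]
      exact pow_le_pow_left₀ hA0 hAle 2
  have b2 : |(A-b)*(A+b)| ≤ ε * (2*M0+1) := by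
    rw [abs_mul]
    apply mul_le_mul hAb ?_ (abs_nonneg _) hεpos.le
    rw [abs_of_nonneg (by linarith)]
    linarith
  calc |(Real.exp (-q/(2*σ^2)) - 1)*A^2 + (A - b)*(A + b)|
      ≤ |(Real.exp (-q/(2*σ^2)) - 1)*A^2| + |(A - b)*(A + b)| := abs_add_le _ _
    _ ≤ ε * (M0+1)^2 + ε * (2*M0+1) := add_le_add b1 b2
    _ = ((M0+1)^2 + (2*M0+1)) * ε := by ring

end Aux

/-- Convergence of the normalized discrete survival-weighted SOSM energy
(with Gaussian weights on survival times sampled from a continuous `t`) to the continuum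
curvature energy:
`N³ Σ_{i=1}^{N-1} exp(-(t(i/N) - t((i+1)/N))²/(2σ²)) ‖γ((i+1)/N) - 2γ(i/N) + γ((i-1)/N)‖²
  → ∫₀¹ ‖γ''(s)‖² ds` as `N → ∞`. -/
theorem discrete_weighted_energy_tendsto {d : ℕ} (γ : ℝ → EuclideanSpace ℝ (Fin d))
    (t : ℝ → ℝ) (hγ : ContDiff ℝ 2 γ) (ht : Continuous t) (σ : ℝ) (hσ : 0 < σ) :
    Tendsto (fun N : ℕ =>
        (N : ℝ) ^ 3 * ∑ i ∈ Finset.Ico 1 N,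
          Real.exp (-(t ((i : ℝ) / N) - t (((i : ℝ) + 1) / N)) ^ 2 / (2 * σ ^ 2))
            * ‖γ (((i : ℝ) + 1) / N) - (2:ℝ) • γ ((i : ℝ) / N) + γ (((i : ℝ) - 1) / N)‖ ^ 2)
      atTop (nhds (∫ s in (0:ℝ)..1, ‖deriv (deriv γ) s‖ ^ 2)) := by
  obtain ⟨hd1, hd2, hc2⟩ : Differentiable ℝ γ ∧ Differentiable ℝ (deriv γ) ∧
      Continuous (deriv (deriv γ)) := by
    have h1 : ContDiff ℝ ((1 : WithTop ℕ∞)+1) γ := by norm_num; exact hγ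
    obtain ⟨hd1, -, h2⟩ := contDiff_succ_iff_deriv.mp h1
    have h3 : ContDiff ℝ ((0 : WithTop ℕ∞)+1) (deriv γ) := by norm_num; exact h2
    obtain ⟨hd2, -, h4⟩ := contDiff_succ_iff_deriv.mp h3
    exact ⟨hd1, hd2, h4.continuous⟩
  have hf : Continuous fun s : ℝ => ‖deriv (deriv γ) s‖^2 := (hc2.norm.pow 2)
  -- claim 1 : Riemann sums converge
  have claim1 : Tendsto (fun N : ℕ => (1/(N:ℝ)) *
      ∑ i ∈ Finset.Ico 1 N, ‖deriv (deriv γ) ((i:ℝ)/N)‖^2)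
      atTop (nhds (∫ s in (0:ℝ)..1, ‖deriv (deriv γ) s‖^2)) := by
    have h0 := riemann_sum_tendsto' _ hf
    have hz : Tendsto (fun N : ℕ => (1/(N:ℝ)) * ‖deriv (deriv γ) 0‖^2) atTop (nhds 0) := by
      simpa using tendsto_one_div_atTop_nhds_zero_nat.mul_const (‖deriv (deriv γ) 0‖^2)
    have h1 := h0.sub hz
    rw [sub_zero] at h1
    apply h1.congr'
    filter_upwards [eventually_ge_atTop 1] with N hN
    rw [Finset.sum_Ico_eq_sub _ hN, Finset.sum_range_one]
    simp only [Nat.cast_zero, zero_div]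
    ring
  -- claim 2 : difference tends to 0
  have claim2 : Tendsto (fun N : ℕ =>
      ((N : ℝ) ^ 3 * ∑ i ∈ Finset.Ico 1 N,
          Real.exp (-(t ((i : ℝ) / N) - t (((i : ℝ) + 1) / N)) ^ 2 / (2 * σ ^ 2))
            * ‖γ (((i : ℝ) + 1) / N) - (2:ℝ) • γ ((i : ℝ) / N) + γ (((i : ℝ) - 1) / N)‖ ^ 2)
        - (1/(N:ℝ)) * ∑ i ∈ Finset.Ico 1 N, ‖deriv (deriv γ) ((i:ℝ)/N)‖^2)
      atTop (nhds 0) := by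
    obtain ⟨M, hM⟩ := isCompact_Icc.exists_bound_of_continuousOn
      (hc2.continuousOn : ContinuousOn (deriv (deriv γ)) (Set.Icc 0 1))
    set M0 := max M 0 with hM0def
    have hM0 : ∀ s ∈ Set.Icc (0:ℝ) 1, ‖deriv (deriv γ) s‖ ≤ M0 :=
      fun s hs => (hM s hs).trans (le_max_left _ _)
    have hM0nn : (0:ℝ) ≤ M0 := le_max_right _ _
    set C := (M0+1)^2 + (2*M0+1) with hCdef
    have hC : 0 < C := by positivity
    rw [Metric.tendsto_atTop]
    intro ε' hε'
    obtain ⟨ε, hεpos, hε1, hεC⟩ : ∃ ε : ℝ, 0 < ε ∧ ε ≤ 1 ∧ C * ε < ε' := by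
      refine ⟨min 1 (ε'/(2*C)), lt_min one_pos (by positivity), min_le_left _ _, ?_⟩
      have h1 : C * min 1 (ε'/(2*C)) ≤ C * (ε'/(2*C)) :=
        mul_le_mul_of_nonneg_left (min_le_right _ _) hC.le
      have h2 : C * (ε'/(2*C)) = ε'/2 := by field_simp
      rw [h2] at h1
      linarith
    have hucG : UniformContinuousOn (deriv (deriv γ)) (Set.Icc 0 1) :=
      isCompact_Icc.uniformContinuousOn_of_continuous hc2.continuousOn
    obtain ⟨δG, hδGpos, hδG'⟩ := Metric.uniformContinuousOn_iff_le.mp hucG ε hεpos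
    have hη : 0 < Real.sqrt (ε * (2*σ^2)) := Real.sqrt_pos.mpr (by positivity)
    have huct : UniformContinuousOn t (Set.Icc 0 1) :=
      isCompact_Icc.uniformContinuousOn_of_continuous ht.continuousOn
    obtain ⟨δt, hδtpos, hδt'⟩ := Metric.uniformContinuousOn_iff_le.mp huct _ hη
    obtain ⟨N₁, hN₁⟩ := exists_nat_gt (max (1/δG) (1/δt))
    refine ⟨max N₁ 1, fun N hN => ?_⟩
    have hN1 : 1 ≤ N := le_trans (le_max_right _ _) hN
    have hNR : (1:ℝ) ≤ N := by exact_mod_cast hN1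
    have hNpos : (0:ℝ) < N := by linarith
    have hNN₁ : (N₁:ℝ) ≤ N := by exact_mod_cast le_trans (le_max_left _ _) hN
    have hhδG : 1/(N:ℝ) ≤ δG := by
      have : 1/δG < (N:ℝ) := lt_of_le_of_lt (le_max_left _ _) (lt_of_lt_of_le hN₁ hNN₁)
      rw [div_lt_iff₀ hδGpos] at this
      rw [div_le_iff₀ hNpos]
      nlinarith
    have hhδt : 1/(N:ℝ) ≤ δt := by
      have : 1/δt < (N:ℝ) := lt_of_le_of_lt (le_max_right _ _) (lt_of_lt_of_le hN₁ hNN₁)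
      rw [div_lt_iff₀ hδtpos] at this
      rw [div_le_iff₀ hNpos]
      nlinarith
    rw [Real.dist_eq, sub_zero, Finset.mul_sum, Finset.mul_sum, ← Finset.sum_sub_distrib]
    have key : ∀ i ∈ Finset.Ico 1 N,
        |(N:ℝ)^3 * (Real.exp (-(t ((i:ℝ)/N) - t (((i:ℝ)+1)/N))^2/(2*σ^2))
            * ‖γ (((i:ℝ)+1)/N) - (2:ℝ) • γ ((i:ℝ)/N) + γ (((i:ℝ)-1)/N)‖^2)
          - (1/(N:ℝ)) * ‖deriv (deriv γ) ((i:ℝ)/N)‖^2| ≤ (1/(N:ℝ)) * (C * ε) := by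
      intro i hi
      obtain ⟨hi1, hi2⟩ := Finset.mem_Ico.mp hi
      exact term_est γ hd1 hd2 hc2 t σ hσ M0 ε δG δt hM0 hM0nn hεpos hε1
        hδG' hδt' N hN1 hhδG hhδt i hi1 hi2
    calc |∑ i ∈ Finset.Ico 1 N,
          ((N:ℝ)^3 * (Real.exp (-(t ((i:ℝ)/N) - t (((i:ℝ)+1)/N))^2/(2*σ^2))
            * ‖γ (((i:ℝ)+1)/N) - (2:ℝ) • γ ((i:ℝ)/N) + γ (((i:ℝ)-1)/N)‖^2)
          - (1/(N:ℝ)) * ‖deriv (deriv γ) ((i:ℝ)/N)‖^2)|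
        ≤ ∑ i ∈ Finset.Ico 1 N,
          |(N:ℝ)^3 * (Real.exp (-(t ((i:ℝ)/N) - t (((i:ℝ)+1)/N))^2/(2*σ^2))
            * ‖γ (((i:ℝ)+1)/N) - (2:ℝ) • γ ((i:ℝ)/N) + γ (((i:ℝ)-1)/N)‖^2)
          - (1/(N:ℝ)) * ‖deriv (deriv γ) ((i:ℝ)/N)‖^2| := Finset.abs_sum_le_sum_abs _ _
      _ ≤ ∑ _i ∈ Finset.Ico 1 N, (1/(N:ℝ)) * (C * ε) := Finset.sum_le_sum key
      _ = ((N - 1 : ℕ) : ℝ) * ((1/(N:ℝ)) * (C * ε)) := by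
          rw [Finset.sum_const, Nat.card_Ico, nsmul_eq_mul]
      _ ≤ (N:ℝ) * ((1/(N:ℝ)) * (C * ε)) := by
          apply mul_le_mul_of_nonneg_right ?_ (by positivity)
          exact_mod_cast Nat.sub_le N 1
      _ = C * ε := by field_simp
      _ < ε' := hεC
  have hfinal := claim2.add claim1
  rw [zero_add] at hfinal
  exact hfinal.congr fun N => by ring
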